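/- If a sequence (a_n) of positive integers is locally realizable at every prime p (i.e., for every prime p the sequence of p-parts (|a_n|_p^{-1})_{n≥1} is realizable), then (a_n) is realizable. -/

import Mathlib

/-- A sequence `a : ℕ → ℕ` (indexed from 1) is realizable if there is a set `X`
and a map `T : X → X` such that for every `n ≥ 1` the set of points fixed by the
`n`-th iterate of `T` is finite with cardinality `a n`. -/
def IsRealizable (a : ℕ → ℕ) : Prop :=
  ∃ (X : Type) (T : X → X), ∀ n : ℕ, 1 ≤ n →
    {x : X | T^[n] x = x}.Finite ∧ {x : X | T^[n] x = x}.ncard = a n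

/-- The Möbius-transformed sum `∑_{d ∣ n} μ(n/d) a_d`. -/
def doldSum (a : ℕ → ℕ) (n : ℕ) : ℤ :=
  ∑ d ∈ n.divisors, (ArithmeticFunction.moebius (n / d) : ℤ) * (a d : ℤ)

/-- Iterates of a product map act coordinatewise. -/
lemma pi_iterate {ι : Type*} {X : ι → Type*} (T : ∀ i, X i → X i) (n : ℕ) (x : ∀ i, X i) :
    (fun (y : ∀ i, X i) i => T i (y i))^[n] x = fun i => (T i)^[n] (x i) := by
  induction n generalizing x with
  | zero => rfl
  | succ n ih =>
      rw [Function.iterate_succ_apply, ih]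
      funext i
      rw [← Function.iterate_succ_apply]

theorem realizable_of_locally_realizable (a : ℕ → ℕ) (hpos : ∀ n : ℕ, 1 ≤ n → 0 < a n)
    (hloc : ∀ p : ℕ, p.Prime → IsRealizable (fun n => p ^ (a n).factorization p)) :
    IsRealizable a := by
  classical
  choose X T h using fun p : {p : ℕ // p.Prime} => hloc p.1 p.2
  refine ⟨∀ p : {p : ℕ // p.Prime}, X p, fun x p => T p (x p), fun n hn => ?_⟩
  let P := {p : ℕ // p.Prime}
  set S : ∀ p : P, Set (X p) := fun p => {y : X p | (T p)^[n] y = y} with hSdef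
  -- basic facts about each local fixed-point set
  have hfin : ∀ p : P, (S p).Finite := fun p => (h p n hn).1
  have hcard : ∀ p : P, Nat.card (S p) = p.1 ^ (a n).factorization p.1 := by
    intro p
    rw [Nat.card_coe_set_eq]
    exact (h p n hn).2
  have hfinc : ∀ p : P, Finite (S p) := fun p => Set.finite_coe_iff.mpr (hfin p)
  have hpos' : ∀ p : P, 0 < Nat.card (S p) := by
    intro p
    rw [hcard p]
    exact pow_pos p.2.pos _
  have hne : ∀ p : P, Nonempty (S p) := fun p => (Nat.card_pos_iff.mp (hpos' p)).1
  -- the predicate singling out the finitely many relevant primes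
  set q : P → Prop := fun p => p.1 ∈ (a n).primeFactors with hq
  have hsub : ∀ p : P, ¬ q p → Subsingleton (S p) := by
    intro p hp
    have hv : (a n).factorization p.1 = 0 := by
      rw [← Finsupp.notMem_support_iff, Nat.support_factorization]
      exact hp
    have h1 : Nat.card (S p) = 1 := by rw [hcard p, hv, pow_zero]
    exact (Nat.card_eq_one_iff_unique.mp h1).1
  -- the fixed-point set of the product map is the product of local fixed-point sets
  have hfixeq : {x : ∀ p : P, X p | (fun x p => T p (x p))^[n] x = x} = Set.pi Set.univ S := by
    ext x
    simp only [Set.mem_setOf_eq, pi_iterate, Set.mem_pi, Set.mem_univ, forall_true_left,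
      funext_iff, hSdef, true_implies]
    exact Iff.rfl
  -- chain of equivalences computing the cardinality
  have e1 := Equiv.Set.univPi S
  have e2 := Equiv.piEquivPiSubtypeProd q (fun p => S p)
  have hfinq : Finite {p : P // q p} := by
    apply Finite.of_injective (fun p : {p : P // q p} => (⟨p.1.1, p.2⟩ : ((a n).primeFactors : Finset ℕ)))
    intro x y hxy
    have h1 := congrArg Subtype.val hxy
    exact Subtype.ext (Subtype.ext h1)
  have hsub2 : Subsingleton (∀ p : {p : P // ¬ q p}, S p.1) := by
    constructor
    intro f g
    funext p
    have := hsub p.1 p.2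
    exact Subsingleton.elim _ _
  have hne2 : Nonempty (∀ p : {p : P // ¬ q p}, S p.1) := ⟨fun p => (hne p.1).some⟩
  have hfin2 : Finite (∀ p : {p : P // ¬ q p}, S p.1) := Finite.of_subsingleton
  have hfin1 : Finite (∀ p : {p : P // q p}, S p.1) := by
    haveI := hfinq
    exact Pi.finite
  have hfinpi : Finite (∀ p : P, S p) := Finite.of_equiv _ e2.symm
  have hfinfix : Finite (Set.pi Set.univ S : Set (∀ p : P, X p)) := Finite.of_equiv _ e1.symm
  constructor
  · rw [hfixeq, ← Set.finite_coe_iff]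
    exact hfinfix
  · rw [hfixeq, ← Nat.card_coe_set_eq]
    rw [Nat.card_congr e1, Nat.card_congr e2, Nat.card_prod]
    have hcard2 : Nat.card (∀ p : {p : P // ¬ q p}, S p.1) = 1 :=
      Nat.card_eq_one_iff_unique.mpr ⟨hsub2, hne2⟩
    rw [hcard2, mul_one]
    -- compute the finite product
    haveI := hfinq
    haveI : Fintype {p : P // q p} := Fintype.ofFinite _
    rw [Nat.card_pi]
    -- identify index type with the prime factors finset
    let E : {p : P // q p} ≃ ((a n).primeFactors : Finset ℕ) :=
      { toFun := fun p => ⟨p.1.1, p.2⟩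
        invFun := fun r => ⟨⟨r.1, Nat.prime_of_mem_primeFactors r.2⟩, r.2⟩
        left_inv := by intro p; ext; rfl
        right_inv := by intro r; rfl }
    rw [Fintype.prod_equiv E (fun p => Nat.card (S p.1))
      (fun r => r.1 ^ (a n).factorization r.1) (by
        intro p
        show Nat.card (S p.1) = (E p).1 ^ (a n).factorization (E p).1
        exact hcard p.1)]
    have hps : ∏ x : {x // x ∈ (a n).primeFactors}, (x : ℕ) ^ (a n).factorization x
        = ∏ q ∈ (a n).primeFactors, q ^ (a n).factorization q :=
      Finset.prod_coe_sort ((a n).primeFactors) (fun t => t ^ (a n).factorization t)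
    rw [hps]
    conv_rhs => rw [← Nat.factorization_prod_pow_eq_self (hpos n hn).ne']
    rfl
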